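/- For every integer n ≥ 1, there exists a set X of cardinality continuum of functions [0,1] → ℝ such that: every element of X belongs to the set E_n of functions that are n times continuously differentiable on [0,1] and, in every nonempty open subinterval of [0,1], fail at some point to have an (n+1)-st derivative; and X is a set of free generators of a subalgebra of ℝ^{[0,1]} contained in E_n ∪ {0}; that is, for every m ≥ 1, all distinct G_1, …, G_m ∈ X, and every nonzero real polynomial P in m variables with zero constant term, the function x ↦ P(G_1(x), …, G_m(x)) belongs to E_n \ {0}. In other words, E_n is strongly 𝔠-algebrable. -/

import Mathlib

open Set

/-- Membership in the set `E n`: a function `[0,1] → ℝ` that is `n` times continuously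
differentiable on `[0,1]` and, in every nonempty open subinterval of `[0,1]`, fails at
some point to have an `(n+1)`-st derivative (relative to `[0,1]`). -/
def MemEn (n : ℕ) (f : ℝ → ℝ) : Prop :=
  ContDiffOn ℝ n f (Icc 0 1) ∧
  ∀ a b : ℝ, 0 ≤ a → a < b → b ≤ 1 →
    ∃ x ∈ Ioo a b,
      ¬ DifferentiableWithinAt ℝ (iteratedDerivWithin n f (Icc 0 1)) (Icc 0 1) x

open Filter Topology

noncomputable def PP (r t : ℝ) : ℝ := (max t 0) ^ r

lemma PP_nonneg (r t : ℝ) : 0 ≤ PP r t := Real.rpow_nonneg (le_max_right _ _) _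

lemma PP_of_nonpos {r : ℝ} (hr : r ≠ 0) {t : ℝ} (ht : t ≤ 0) : PP r t = 0 := by
  simp [PP, max_eq_right ht, Real.zero_rpow hr]

lemma PP_of_pos {r t : ℝ} (ht : 0 < t) : PP r t = t ^ r := by
  simp [PP, max_eq_left ht.le]

lemma PP_mono {r : ℝ} (hr : 0 ≤ r) : Monotone (PP r) := fun a b hab =>
  Real.rpow_le_rpow (le_max_right _ _) (max_le_max hab le_rfl) hr

lemma PP_le {r t M : ℝ} (hr : 0 ≤ r) (hM : 0 ≤ M) (ht : t ≤ M) : PP r t ≤ M ^ r :=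
  Real.rpow_le_rpow (le_max_right _ _) (max_le ht hM) hr

lemma PP_continuous {r : ℝ} (hr : 0 < r) : Continuous (PP r) := by
  rw [continuous_iff_continuousAt]
  intro t
  exact (Real.continuousAt_rpow_const _ _ (Or.inr hr.le)).comp
    (continuous_id.max continuous_const).continuousAt

lemma hasDerivAt_PP {r : ℝ} (hr : 1 < r) (t : ℝ) :
    HasDerivAt (PP r) (r * PP (r - 1) t) t := by
  rcases lt_trichotomy t 0 with ht | rfl | ht
  · have h0 : PP (r - 1) t = 0 := PP_of_nonpos (by linarith) ht.le
    rw [h0, mul_zero]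
    have : PP r =ᶠ[𝓝 t] fun _ => (0 : ℝ) := by
      filter_upwards [eventually_lt_nhds ht] with s hs
      exact PP_of_nonpos (by positivity) hs.le
    exact (hasDerivAt_const t 0).congr_of_eventuallyEq this
  · have h0 : PP (r - 1) 0 = 0 := PP_of_nonpos (by linarith) le_rfl
    rw [h0, mul_zero]
    rw [hasDerivAt_iff_isLittleO]
    have h1 : Tendsto (fun h : ℝ => |h| ^ (r - 1)) (𝓝 0) (𝓝 0) := by
      have ha : Tendsto (fun h : ℝ => |h|) (𝓝 0) (𝓝 (0:ℝ)) := by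
        simpa using continuous_abs.tendsto (0:ℝ)
      have hb := (Real.continuousAt_rpow_const 0 (r - 1) (Or.inr (by linarith))).tendsto
      simpa [Function.comp_def, Real.zero_rpow (show r - 1 ≠ 0 by linarith)] using hb.comp ha
    rw [Asymptotics.isLittleO_iff]
    intro c hc
    filter_upwards [h1.eventually (eventually_le_nhds hc)] with h hh
    have hb : PP r h ≤ |h| ^ r := PP_le (by linarith) (abs_nonneg _) (le_abs_self _)
    have hP0 : PP r 0 = 0 := PP_of_nonpos (by linarith) le_rfl
    simp only [zero_add, hP0, smul_zero, sub_zero, Real.norm_eq_abs]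
    rw [abs_of_nonneg (PP_nonneg r h)]
    rcases eq_or_ne h 0 with rfl | hne
    · simp [hP0]
    · have habs : (0:ℝ) < |h| := abs_pos.2 hne
      have heq : |h| ^ r = |h| ^ (r - 1) * |h| := by
        rw [← Real.rpow_add_one habs.ne' (r-1)]; ring_nf
      calc PP r h ≤ |h| ^ r := hb
        _ = |h| ^ (r - 1) * |h| := heq
        _ ≤ c * |h| := mul_le_mul_of_nonneg_right hh (abs_nonneg _)
  · have : PP r =ᶠ[𝓝 t] fun s => s ^ r := by
      filter_upwards [eventually_gt_nhds ht] with s hs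
      exact PP_of_pos hs
    have hd : HasDerivAt (fun s : ℝ => s ^ r) (r * t ^ (r - 1)) t := by
      simpa [mul_comm] using Real.hasDerivAt_rpow_const (p := r) (Or.inl ht.ne')
    rw [PP_of_pos ht]
    exact hd.congr_of_eventuallyEq this

noncomputable def qseq (k : ℕ) : ℝ :=
  let q : ℚ := (Denumerable.eqv ℚ).symm k
  if (0:ℝ) < (q:ℝ) ∧ (q:ℝ) < 1 then (q:ℝ) else 1/2

lemma qseq_mem (k : ℕ) : qseq k ∈ Ioo (0:ℝ) 1 := by
  unfold qseq
  by_cases h : (0:ℝ) < ((Denumerable.eqv ℚ).symm k : ℚ) ∧ (((Denumerable.eqv ℚ).symm k : ℚ):ℝ) < 1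
  · simpa [h] using h
  · simp only [h, if_false]; norm_num

lemma qseq_dense {a b : ℝ} (ha : 0 ≤ a) (hab : a < b) (hb : b ≤ 1) :
    ∃ k, qseq k ∈ Ioo a b := by
  obtain ⟨q, hq1, hq2⟩ := exists_rat_btwn hab
  refine ⟨Denumerable.eqv ℚ q, ?_⟩
  have h0 : (0:ℝ) < (q:ℝ) := lt_of_le_of_lt ha hq1
  have h1 : (q:ℝ) < 1 := lt_of_lt_of_le hq2 hb
  unfold qseq
  simp only [Equiv.symm_apply_apply]
  rw [if_pos ⟨h0, h1⟩]
  exact ⟨hq1, hq2⟩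

section F
variable (n : ℕ)

noncomputable def pexp : ℝ := (n : ℝ) + 1/2

noncomputable def CC (j : ℕ) : ℝ := ∏ i ∈ Finset.range j, (pexp n - i)

lemma CC_pos {j : ℕ} (hj : j ≤ n) : 0 < CC n j := by
  apply Finset.prod_pos
  intro i hi
  have : i < j := Finset.mem_range.1 hi
  have : (i:ℝ) ≤ (n:ℝ) - 1 := by
    have : i + 1 ≤ n := by omega
    have := Nat.cast_le (α := ℝ).2 this
    push_cast at this ⊢; linarith
  unfold pexp; linarith

lemma CC_succ (j : ℕ) : CC n (j+1) = CC n j * (pexp n - j) := Finset.prod_range_succ _ _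

noncomputable def gg (j : ℕ) (x : ℝ) : ℝ :=
  ∑' k, (1/2:ℝ)^k * (CC n j * PP (pexp n - j) (x - qseq k))

lemma pexp_sub_pos {j : ℕ} (hj : j ≤ n) : 0 < pexp n - j := by
  have := Nat.cast_le (α := ℝ).2 hj
  unfold pexp; linarith

lemma term_bound {j : ℕ} (hj : j ≤ n) {x : ℝ} (hx : x ∈ Ioo (-1:ℝ) 2) (k : ℕ) :
    ‖(1/2:ℝ)^k * (CC n j * PP (pexp n - j) (x - qseq k))‖ ≤
      (1/2:ℝ)^k * (CC n j * 2 ^ (pexp n - j)) := by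
  have hr := (pexp_sub_pos n hj).le
  have h1 : PP (pexp n - j) (x - qseq k) ≤ 2 ^ (pexp n - j) := by
    apply PP_le hr (by norm_num)
    have := (qseq_mem k).1
    have := hx.2
    linarith
  have h2 : 0 ≤ PP (pexp n - j) (x - qseq k) := PP_nonneg _ _
  have hC := (CC_pos n hj).le
  rw [Real.norm_eq_abs, abs_of_nonneg (by positivity)]
  have : CC n j * PP (pexp n - j) (x - qseq k) ≤ CC n j * 2 ^ (pexp n - j) :=
    mul_le_mul_of_nonneg_left h1 hC
  nlinarith [pow_pos (by norm_num : (0:ℝ) < 1/2) k]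

lemma summable_u (c : ℝ) : Summable (fun k : ℕ => (1/2:ℝ)^k * c) :=
  (summable_geometric_of_lt_one (by norm_num) (by norm_num)).mul_right c

lemma summable_gg {j : ℕ} (hj : j ≤ n) {x : ℝ} (hx : x ∈ Ioo (-1:ℝ) 2) :
    Summable (fun k : ℕ => (1/2:ℝ)^k * (CC n j * PP (pexp n - j) (x - qseq k))) := by
  apply Summable.of_norm
  apply Summable.of_nonneg_of_le (fun k => norm_nonneg _) (term_bound n hj hx)
  exact summable_u _

lemma hasDerivAt_gg {j : ℕ} (hj : j < n) {x : ℝ} (hx : x ∈ Ioo (-1:ℝ) 2) :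
    HasDerivAt (gg n j) (gg n (j+1) x) x := by
  have key : ∀ (k : ℕ) (y : ℝ),
      HasDerivAt (fun z => (1/2:ℝ)^k * (CC n j * PP (pexp n - j) (z - qseq k)))
        ((1/2:ℝ)^k * (CC n (j+1) * PP (pexp n - ((j+1:ℕ):ℝ)) (y - qseq k))) y := by
    intro k y
    have hr : 1 < pexp n - j := by
      have : (j:ℝ) ≤ (n:ℝ) - 1 := by
        have := Nat.cast_le (α := ℝ).2 (show j + 1 ≤ n by omega)
        push_cast at this ⊢; linarith
      unfold pexp; linarith
    have h1 : HasDerivAt (fun z : ℝ => PP (pexp n - j) (z - qseq k))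
        ((pexp n - j) * PP (pexp n - j - 1) (y - qseq k)) y := by
      have := (hasDerivAt_PP hr (y - qseq k)).comp y
        ((hasDerivAt_id y).sub_const (qseq k))
      simpa [Function.comp_def] using this
    have h2 := (h1.const_mul (CC n j)).const_mul ((1/2:ℝ)^k)
    have e1 : pexp n - ((j+1:ℕ):ℝ) = pexp n - j - 1 := by push_cast; ring
    rw [e1, CC_succ]
    exact h2.congr_deriv (by ring)
  have := hasDerivAt_tsum_of_isPreconnected
    (summable_u ((CC n (j+1) * 2 ^ (pexp n - ((j+1:ℕ):ℝ)))))
    isOpen_Ioo isPreconnected_Ioo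
    (fun k y hy => key k y)
    (fun k y hy => term_bound n (by omega) hy k)
    (show (0:ℝ) ∈ Ioo (-1:ℝ) 2 by norm_num)
    (summable_gg n hj.le (show (0:ℝ) ∈ Ioo (-1:ℝ) 2 by norm_num))
    hx
  exact this

lemma continuousOn_gg {j : ℕ} (hj : j ≤ n) :
    ContinuousOn (gg n j) (Ioo (-1:ℝ) 2) := by
  apply (tendstoUniformlyOn_tsum (summable_u ((CC n j * 2 ^ (pexp n - j))))
    (fun k x hx => term_bound n hj hx k)).continuousOn
  refine Filter.Frequently.of_forall fun N => ?_
  apply continuousOn_finset_sum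
  intro k _
  exact (continuous_const.mul (continuous_const.mul
    ((PP_continuous (pexp_sub_pos n hj)).comp
      (continuous_id.sub continuous_const)))).continuousOn
end F


lemma CC_zero (n : ℕ) : CC n 0 = 1 := Finset.prod_range_zero _

lemma pexp_sub_self (n : ℕ) : pexp n - n = 1/2 := by unfold pexp; ring

lemma gg_def (n j : ℕ) (x : ℝ) :
    gg n j x = ∑' k, (1/2:ℝ)^k * (CC n j * PP (pexp n - j) (x - qseq k)) := rfl

notation "K01" => Icc (0:ℝ) 1

lemma K01_unique : UniqueDiffOn ℝ K01 := uniqueDiffOn_Icc zero_lt_one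

lemma K01_sub : K01 ⊆ Ioo (-1:ℝ) 2 := fun x hx => ⟨by linarith [hx.1], by linarith [hx.2]⟩

/-- C^d smoothness of the tails. -/
lemma contDiffOn_gg (n : ℕ) : ∀ (d : ℕ) (j : ℕ), j + d ≤ n → ContDiffOn ℝ d (gg n j) K01 := by
  intro d
  induction d with
  | zero =>
    intro j hj
    rw [show ((0:ℕ) : WithTop ℕ∞) = 0 from rfl, contDiffOn_zero]
    exact (continuousOn_gg n (by omega)).mono K01_sub
  | succ d ih =>
    intro j hj
    have hdiff : DifferentiableOn ℝ (gg n j) K01 := fun x hx =>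
      ((hasDerivAt_gg n (by omega) (K01_sub hx)).differentiableAt).differentiableWithinAt
    have heq : EqOn (derivWithin (gg n j) K01) (gg n (j+1)) K01 := by
      intro x hx
      exact ((hasDerivAt_gg n (by omega) (K01_sub hx)).hasDerivWithinAt).derivWithin
        (K01_unique x hx)
    have : ContDiffOn ℝ d (derivWithin (gg n j) K01) K01 :=
      (ih (j+1) (by omega)).congr heq
    rw [show ((d+1 : ℕ) : WithTop ℕ∞) = (d : WithTop ℕ∞) + 1 by push_cast; rfl]
    rw [contDiffOn_succ_iff_derivWithin K01_unique]
    refine ⟨hdiff, ⟨by simp, this⟩⟩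

lemma iteratedDerivWithin_gg (n : ℕ) : ∀ (j : ℕ), j ≤ n →
    EqOn (iteratedDerivWithin j (gg n 0) K01) (gg n j) K01 := by
  intro j
  induction j with
  | zero => intro _ x hx; simp [iteratedDerivWithin_zero]
  | succ j ih =>
    intro hj x hx
    rw [iteratedDerivWithin_succ]
    rw [derivWithin_congr (ih (by omega)) (ih (by omega) hx)]
    exact ((hasDerivAt_gg n (by omega) (K01_sub hx)).hasDerivWithinAt).derivWithin
      (K01_unique x hx)

lemma gg_strictMono (n : ℕ) : StrictMonoOn (gg n 0) K01 := by
  intro x hx y hy hxy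
  obtain ⟨k0, hk0⟩ := qseq_dense hx.1 hxy hy.2
  rw [gg_def, gg_def]
  simp only [Nat.cast_zero]
  have hsx := summable_gg n (Nat.zero_le n) (K01_sub hx)
  have hsy := summable_gg n (Nat.zero_le n) (K01_sub hy)
  simp only [Nat.cast_zero] at hsx hsy
  refine Summable.tsum_lt_tsum (i := k0) (fun k => ?_) ?_ hsx hsy
  · have : PP (pexp n - 0) (x - qseq k) ≤ PP (pexp n - 0) (y - qseq k) :=
      PP_mono (by simpa using (pexp_sub_pos n (Nat.zero_le n)).le) (by linarith)
    have hC := (CC_pos n (Nat.zero_le n)).le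
    have := mul_le_mul_of_nonneg_left this hC
    nlinarith [pow_pos (by norm_num : (0:ℝ) < 1/2) k]
  · have h1 : PP (pexp n - 0) (x - qseq k0) = 0 :=
      PP_of_nonpos (by simpa using (pexp_sub_pos n (Nat.zero_le n)).ne') (by linarith [hk0.1])
    have h2 : PP (pexp n - 0) (y - qseq k0) = (y - qseq k0) ^ (pexp n - 0) :=
      PP_of_pos (by linarith [hk0.2])
    have h3 : (0:ℝ) < (y - qseq k0) ^ (pexp n - 0) :=
      Real.rpow_pos_of_pos (by linarith [hk0.2]) _
    have hC := CC_pos n (Nat.zero_le n)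
    rw [h1, h2]
    simp only [mul_zero]
    exact mul_pos (pow_pos (by norm_num : (0:ℝ) < 1/2) k0) (mul_pos hC h3)

lemma gg_zero_eq (n : ℕ) : gg n 0 0 = 0 := by
  rw [gg_def]
  simp only [Nat.cast_zero]
  convert tsum_zero with k
  have : PP (pexp n - 0) (0 - qseq k) = 0 :=
    PP_of_nonpos (by simpa using (pexp_sub_pos n (Nat.zero_le n)).ne')
      (by linarith [(qseq_mem k).1])
  rw [this]; ring

lemma gg_not_diff (n : ℕ) (k0 : ℕ) :
    ¬ DifferentiableWithinAt ℝ (gg n n) K01 (qseq k0) := by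
  intro hdiff
  set x0 := qseq k0 with hx0
  have hx0m : x0 ∈ Ioo (0:ℝ) 1 := qseq_mem k0
  have hx0K : x0 ∈ K01 := ⟨hx0m.1.le, hx0m.2.le⟩
  have hHD := hdiff.hasDerivWithinAt
  rw [hasDerivWithinAt_iff_tendsto_slope] at hHD
  have hsub : Ioc x0 1 ⊆ K01 \ {x0} := by
    intro y hy
    refine ⟨⟨by linarith [hx0m.1, hy.1], hy.2⟩, ?_⟩
    simp only [mem_singleton_iff]
    exact (ne_of_gt hy.1)
  have hmono := hHD.mono_left (nhdsWithin_mono x0 hsub)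
  set c : ℝ := (1/2:ℝ)^k0 * CC n n with hc
  have hcpos : 0 < c := by
    have := CC_pos n (le_refl n)
    positivity
  have hlow : ∀ y ∈ Ioc x0 1, c * (((y - x0) ^ (1/2:ℝ))⁻¹) ≤ slope (gg n n) x0 y := by
    intro y hy
    have hyK : y ∈ K01 := ⟨by linarith [hx0m.1, hy.1], hy.2⟩
    have ht : (0:ℝ) < y - x0 := by linarith [hy.1]
    have hsx := summable_gg n (le_refl n) (K01_sub hx0K)
    have hsy := summable_gg n (le_refl n) (K01_sub hyK)
    have hdiffsum : gg n n y - gg n n x0 =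
        ∑' k, ((1/2:ℝ)^k * (CC n n * PP (pexp n - n) (y - qseq k))
          - (1/2:ℝ)^k * (CC n n * PP (pexp n - n) (x0 - qseq k))) := by
      rw [gg_def, gg_def, Summable.tsum_sub hsy hsx]
    have hterm : ∀ k, (0:ℝ) ≤ (1/2:ℝ)^k * (CC n n * PP (pexp n - n) (y - qseq k))
          - (1/2:ℝ)^k * (CC n n * PP (pexp n - n) (x0 - qseq k)) := by
      intro k
      have hm : PP (pexp n - n) (x0 - qseq k) ≤ PP (pexp n - n) (y - qseq k) :=
        PP_mono (pexp_sub_pos n (le_refl n)).le (by linarith)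
      have hC := (CC_pos n (le_refl n)).le
      have := mul_le_mul_of_nonneg_left hm hC
      nlinarith [pow_pos (by norm_num : (0:ℝ) < 1/2) k]
    have hk0term : (1/2:ℝ)^k0 * (CC n n * PP (pexp n - n) (y - qseq k0))
          - (1/2:ℝ)^k0 * (CC n n * PP (pexp n - n) (x0 - qseq k0))
        = c * (y - x0) ^ (1/2:ℝ) := by
      have h1 : PP (pexp n - n) (x0 - qseq k0) = 0 :=
        PP_of_nonpos (pexp_sub_pos n (le_refl n)).ne' (by rw [hx0]; simp)
      have h2 : PP (pexp n - n) (y - qseq k0) = (y - x0) ^ (pexp n - n) :=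
        PP_of_pos (by simpa [hx0] using ht)
      rw [h1, h2, pexp_sub_self]
      ring
    have hge : c * (y - x0) ^ (1/2:ℝ) ≤ gg n n y - gg n n x0 := by
      rw [hdiffsum, ← hk0term]
      exact Summable.le_tsum ((hsy.sub hsx)) k0 (fun j _ => hterm j)
    have hhalf : (0:ℝ) < (y - x0) ^ (1/2:ℝ) := Real.rpow_pos_of_pos ht _
    set s := (y - x0) ^ (1/2:ℝ) with hs
    have hsq : s * s = y - x0 := by
      rw [hs, ← Real.rpow_add ht]; norm_num
    rw [slope_def_field]
    have heq2 : c * s⁻¹ = (c * s) / (y - x0) := by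
      rw [eq_div_iff ht.ne', ← hsq]
      field_simp
    rw [heq2]
    gcongr
  have hIocNe : (𝓝[Ioc x0 1] x0).NeBot := by
    rw [nhdsWithin_Ioc_eq_nhdsGT hx0m.2]
    exact nhdsGT_neBot x0
  have h1 : Tendsto (fun y => (y - x0) ^ (1/2:ℝ)) (𝓝[Ioc x0 1] x0) (𝓝[>] (0:ℝ)) := by
    rw [tendsto_nhdsWithin_iff]
    constructor
    · have hcont : ContinuousAt (fun y : ℝ => (y - x0) ^ (1/2:ℝ)) x0 := by
        apply (Real.continuousAt_rpow_const _ _ (Or.inr (by norm_num))).comp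
        exact (continuous_id.sub continuous_const).continuousAt
      have h4 := hcont.tendsto
      simp only [sub_self] at h4
      rw [Real.zero_rpow (by norm_num)] at h4
      exact h4.mono_left nhdsWithin_le_nhds
    · filter_upwards [self_mem_nhdsWithin] with y hy
      exact Real.rpow_pos_of_pos (by linarith [hy.1]) _
  have h2 : Tendsto (fun y => c * (((y - x0) ^ (1/2:ℝ))⁻¹)) (𝓝[Ioc x0 1] x0) atTop :=
    Tendsto.const_mul_atTop hcpos h1.inv_tendsto_nhdsGT_zero
  have h3 : Tendsto (slope (gg n n) x0) (𝓝[Ioc x0 1] x0) atTop := by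
    apply tendsto_atTop_mono' _ _ h2
    filter_upwards [self_mem_nhdsWithin] with y hy using hlow y hy
  exact not_tendsto_nhds_of_tendsto_atTop h3 _ hmono

lemma expsum_zero_aux {ι : Type*} [DecidableEq ι] : ∀ (N : ℕ) (s : Finset ι), s.card ≤ N →
    ∀ (μ a : ι → ℝ), Set.InjOn μ s →
    (∀ t : ℝ, ∑ α ∈ s, a α * Real.exp (μ α * t) = 0) → ∀ α ∈ s, a α = 0 := by
  intro N
  induction N with
  | zero =>
    intro s hs μ a _ _ α hα
    rw [Finset.card_eq_zero.1 (Nat.le_zero.1 hs)] at hα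
    exact absurd hα (Finset.notMem_empty α)
  | succ N ih =>
    intro s hs μ a hinj h α hα
    obtain ⟨α0, hα0, hmax⟩ := s.exists_max_image μ ⟨α, hα⟩
    -- the normalized sum tends to a α0
    have key : Tendsto (fun t => ∑ β ∈ s, a β * Real.exp ((μ β - μ α0) * t)) atTop
        (𝓝 (∑ β ∈ s, if β = α0 then a α0 else 0)) := by
      apply tendsto_finset_sum
      intro β hβ
      by_cases hb : β = α0
      · subst hb
        simp only [sub_self, zero_mul, Real.exp_zero, mul_one, if_true]
        exact tendsto_const_nhds
      · rw [if_neg hb]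
        have hlt : μ β < μ α0 := by
          rcases lt_or_eq_of_le (hmax β hβ) with h' | h'
          · exact h'
          · exact absurd (hinj hβ hα0 h') hb
        have h1 : Tendsto (fun t : ℝ => (μ β - μ α0) * t) atTop atBot :=
          (tendsto_const_mul_atBot_of_neg (show μ β - μ α0 < 0 by linarith)).2 tendsto_id
        have h2 := Real.tendsto_exp_atBot.comp h1
        have := h2.const_mul (a β)
        simpa using this
    have hzero : ∀ t : ℝ, ∑ β ∈ s, a β * Real.exp ((μ β - μ α0) * t) = 0 := by
      intro t
      have : ∑ β ∈ s, a β * Real.exp ((μ β - μ α0) * t)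
          = (∑ β ∈ s, a β * Real.exp (μ β * t)) * Real.exp (-(μ α0 * t)) := by
        rw [Finset.sum_mul]
        apply Finset.sum_congr rfl
        intro β _
        rw [mul_assoc, ← Real.exp_add]
        ring_nf
      rw [this, h t, zero_mul]
    have ha0 : a α0 = 0 := by
      have h2 : Tendsto (fun t => ∑ β ∈ s, a β * Real.exp ((μ β - μ α0) * t)) atTop (𝓝 0) := by
        simp only [hzero]; exact tendsto_const_nhds
      have := tendsto_nhds_unique key h2
      rwa [Finset.sum_ite_eq' s α0 (fun _ => a α0), if_pos hα0] at this
    have herase : ∀ t : ℝ, ∑ β ∈ s.erase α0, a β * Real.exp (μ β * t) = 0 := by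
      intro t
      have h2 := Finset.sum_erase_add s (fun β => a β * Real.exp (μ β * t)) hα0
      simp only [ha0, zero_mul, add_zero] at h2
      rw [h2]
      exact h t
    rcases eq_or_ne α α0 with rfl | hne
    · exact ha0
    · exact ih (s.erase α0) (by
        have := Finset.card_erase_of_mem hα0; omega) μ a
        (hinj.mono (Finset.coe_subset.2 (Finset.erase_subset _ _)))
        herase α (Finset.mem_erase.2 ⟨hne, hα⟩)

lemma expsum_zero {ι : Type*} [DecidableEq ι] (s : Finset ι) (μ a : ι → ℝ)
    (hinj : Set.InjOn μ s) (h : ∀ t : ℝ, ∑ α ∈ s, a α * Real.exp (μ α * t) = 0) :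
    ∀ α ∈ s, a α = 0 :=
  expsum_zero_aux s.card s le_rfl μ a hinj h

lemma expsum_analytic {ι : Type*} (s : Finset ι) (μ a : ι → ℝ) :
    AnalyticOnNhd ℝ (fun t => ∑ α ∈ s, a α * Real.exp (μ α * t)) univ := by
  apply Finset.analyticOnNhd_fun_sum
  intro α _
  apply AnalyticOnNhd.mul analyticOnNhd_const
  exact analyticOnNhd_rexp.comp (analyticOnNhd_const.mul analyticOnNhd_id)
    (mapsTo_univ _ _)

lemma expsum_zero_of_interval {ι : Type*} [DecidableEq ι] {u v : ℝ} (huv : u < v)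
    (s : Finset ι) (μ a : ι → ℝ) (hinj : Set.InjOn μ s)
    (h : ∀ t ∈ Ioo u v, ∑ α ∈ s, a α * Real.exp (μ α * t) = 0) :
    ∀ α ∈ s, a α = 0 := by
  have hana := expsum_analytic s μ a
  have hEq : EqOn (fun t => ∑ α ∈ s, a α * Real.exp (μ α * t)) 0 univ := by
    apply hana.eqOn_zero_of_preconnected_of_eventuallyEq_zero isPreconnected_univ
      (mem_univ ((u+v)/2))
    filter_upwards [Ioo_mem_nhds (show u < (u+v)/2 by linarith) (show (u+v)/2 < v by linarith)]
      with t ht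
    exact h t ht
  exact expsum_zero s μ a hinj (fun t => hEq (mem_univ t))

section Faa
variable {n : ℕ} (hn : 1 ≤ n) {f : ℝ → ℝ} (hf : ContDiffOn ℝ n f K01)
  (Ψ : ℕ → ℝ → ℝ) (hΨ : ∀ j t, HasDerivAt (Ψ j) (Ψ (j+1) t) t)

/-- The generating set for the algebra of "remainder" terms. -/
def faaS (Ψ : ℕ → ℝ → ℝ) (f : ℝ → ℝ) (k : ℕ) : Set (ℝ → ℝ) :=
  {g | ∃ j, g = fun x => Ψ j (f x)} ∪
    {g | ∃ i, i ≤ k ∧ g = iteratedDerivWithin i f K01}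

noncomputable def faaA (Ψ : ℕ → ℝ → ℝ) (f : ℝ → ℝ) (k : ℕ) : Subalgebra ℝ (ℝ → ℝ) :=
  Algebra.adjoin ℝ (faaS Ψ f k)

lemma faaA_mono {Ψ : ℕ → ℝ → ℝ} {f : ℝ → ℝ} {k l : ℕ} (hkl : k ≤ l) :
    faaA Ψ f k ≤ faaA Ψ f l := by
  apply Algebra.adjoin_mono
  rintro g (hg | ⟨i, hi, rfl⟩)
  · exact Or.inl hg
  · exact Or.inr ⟨i, le_trans hi hkl, rfl⟩

include hn hf hΨ in
lemma faa_deriv_mem {k : ℕ} (hk : k < n) :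
    ∀ g ∈ faaA Ψ f k, ∃ g' : ℝ → ℝ, g' ∈ faaA Ψ f (k+1) ∧
      ∀ x ∈ K01, HasDerivWithinAt g (g' x) K01 x := by
  intro g hg
  have hfd : ∀ x ∈ K01, HasDerivWithinAt f (iteratedDerivWithin 1 f K01 x) K01 x := by
    intro x hx
    have hd : DifferentiableWithinAt ℝ f K01 x :=
      hf.differentiableOn (by exact_mod_cast (show n ≠ 0 by omega)) x hx
    have := hd.hasDerivWithinAt
    rwa [← iteratedDerivWithin_one] at this
  induction hg using Algebra.adjoin_induction with
  | mem g hgS =>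
    rcases hgS with ⟨j, rfl⟩ | ⟨i, hi, rfl⟩
    · refine ⟨fun x => Ψ (j+1) (f x) * iteratedDerivWithin 1 f K01 x, ?_, ?_⟩
      · exact mul_mem (Algebra.subset_adjoin (Or.inl ⟨j+1, rfl⟩))
          (Algebra.subset_adjoin (Or.inr ⟨1, by omega, rfl⟩))
      · intro x hx
        exact (hΨ j (f x)).comp_hasDerivWithinAt x (hfd x hx)
    · refine ⟨iteratedDerivWithin (i+1) f K01, ?_, ?_⟩
      · exact Algebra.subset_adjoin (Or.inr ⟨i+1, by omega, rfl⟩)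
      · intro x hx
        have hd : DifferentiableWithinAt ℝ (iteratedDerivWithin i f K01) K01 x :=
          hf.differentiableOn_iteratedDerivWithin (by exact_mod_cast lt_of_le_of_lt hi hk)
            K01_unique x hx
        have := hd.hasDerivWithinAt
        rwa [← iteratedDerivWithin_succ] at this
  | algebraMap r =>
    exact ⟨0, zero_mem _, fun x hx => hasDerivWithinAt_const x K01 r⟩
  | add u v hu hv ihu ihv =>
    obtain ⟨u', hu'm, hu'd⟩ := ihu
    obtain ⟨v', hv'm, hv'd⟩ := ihv
    exact ⟨u' + v', add_mem hu'm hv'm, fun x hx => (hu'd x hx).add (hv'd x hx)⟩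
  | mul u v hu hv ihu ihv =>
    obtain ⟨u', hu'm, hu'd⟩ := ihu
    obtain ⟨v', hv'm, hv'd⟩ := ihv
    refine ⟨u' * v + u * v', ?_, ?_⟩
    · exact add_mem (mul_mem hu'm (faaA_mono (Nat.le_succ k) hv))
        (mul_mem (faaA_mono (Nat.le_succ k) hu) hv'm)
    · intro x hx
      exact (hu'd x hx).mul (hv'd x hx)

include hn hf hΨ in
lemma faa_formula : ∀ m : ℕ, 1 ≤ m → m ≤ n →
    ∃ R : ℝ → ℝ, R ∈ faaA Ψ f (m-1) ∧ ∀ x ∈ K01,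
      iteratedDerivWithin m (fun y => Ψ 0 (f y)) K01 x
        = Ψ 1 (f x) * iteratedDerivWithin m f K01 x + R x := by
  have hfd : ∀ x ∈ K01, HasDerivWithinAt f (iteratedDerivWithin 1 f K01 x) K01 x := by
    intro x hx
    have hd : DifferentiableWithinAt ℝ f K01 x :=
      hf.differentiableOn (by exact_mod_cast (show n ≠ 0 by omega)) x hx
    have := hd.hasDerivWithinAt
    rwa [← iteratedDerivWithin_one] at this
  intro m hm1
  induction m, hm1 using Nat.le_induction with
  | base =>
    intro _
    refine ⟨0, zero_mem _, fun x hx => ?_⟩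
    rw [iteratedDerivWithin_one]
    have hc : HasDerivWithinAt (fun y => Ψ 0 (f y))
        (Ψ 1 (f x) * iteratedDerivWithin 1 f K01 x) K01 x :=
      (hΨ 0 (f x)).comp_hasDerivWithinAt x (hfd x hx)
    rw [hc.derivWithin (K01_unique.uniqueDiffWithinAt hx)]
    simp
  | succ m hm ih =>
    intro hmn
    obtain ⟨R, hRm, hR⟩ := ih (by omega)
    obtain ⟨R', hR'm, hR'd⟩ := faa_deriv_mem hn hf Ψ hΨ (show m - 1 < n by omega) R hRm
    have hR'm' : R' ∈ faaA Ψ f m := by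
      have : m - 1 + 1 = m := by omega
      rwa [this] at hR'm
    refine ⟨fun x => Ψ 2 (f x) * iteratedDerivWithin 1 f K01 x
        * iteratedDerivWithin m f K01 x + R' x, ?_, ?_⟩
    · have h1 : (fun x => Ψ 2 (f x)) ∈ faaA Ψ f m := Algebra.subset_adjoin (Or.inl ⟨2, rfl⟩)
      have h2 : iteratedDerivWithin 1 f K01 ∈ faaA Ψ f m :=
        Algebra.subset_adjoin (Or.inr ⟨1, by omega, rfl⟩)
      have h3 : iteratedDerivWithin m f K01 ∈ faaA Ψ f m :=
        Algebra.subset_adjoin (Or.inr ⟨m, le_rfl, rfl⟩)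
      have : m + 1 - 1 = m := by omega
      rw [this]
      exact add_mem (mul_mem (mul_mem h1 h2) h3) hR'm'
    · intro x hx
      rw [iteratedDerivWithin_succ]
      rw [derivWithin_congr (fun y hy => hR y hy) (hR x hx)]
      have h1 : HasDerivWithinAt (fun y => Ψ 1 (f y))
          (Ψ 2 (f x) * iteratedDerivWithin 1 f K01 x) K01 x :=
        (hΨ 1 (f x)).comp_hasDerivWithinAt x (hfd x hx)
      have h2 : HasDerivWithinAt (iteratedDerivWithin m f K01)
          (iteratedDerivWithin (m+1) f K01 x) K01 x := by
        have hd : DifferentiableWithinAt ℝ (iteratedDerivWithin m f K01) K01 x :=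
          hf.differentiableOn_iteratedDerivWithin (by exact_mod_cast hmn)
            K01_unique x hx
        have := hd.hasDerivWithinAt
        rwa [← iteratedDerivWithin_succ] at this
      have h3 : HasDerivWithinAt R (R' x) K01 x := hR'd x hx
      have htot := ((h1.fun_mul h2).fun_add h3)
      rw [htot.derivWithin (K01_unique.uniqueDiffWithinAt hx)]
      ring

include hn hf hΨ in
lemma faa_A_diff : ∀ g ∈ faaA Ψ f (n-1), ∀ x ∈ K01, DifferentiableWithinAt ℝ g K01 x := by
  intro g hg x hx
  obtain ⟨g', _, hd⟩ := faa_deriv_mem hn hf Ψ hΨ (show n - 1 < n by omega) g hg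
  exact (hd x hx).differentiableWithinAt

end Faa


lemma faa_formula' {n : ℕ} {f : ℝ → ℝ} (Ψ : ℕ → ℝ → ℝ) (hn : 1 ≤ n)
    (hf : ContDiffOn ℝ n f K01) (hΨ : ∀ j t, HasDerivAt (Ψ j) (Ψ (j+1) t) t) :
    ∃ R : ℝ → ℝ, (∀ x ∈ K01, DifferentiableWithinAt ℝ R K01 x) ∧ ∀ x ∈ K01,
      iteratedDerivWithin n (fun y => Ψ 0 (f y)) K01 x
        = Ψ 1 (f x) * iteratedDerivWithin n f K01 x + R x := by
  obtain ⟨R, hRm, hR⟩ := faa_formula hn hf Ψ hΨ n hn le_rfl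
  exact ⟨R, fun x hx => faa_A_diff hn hf Ψ hΨ R hRm x hx, hR⟩

section Main
variable {n : ℕ} {f : ℝ → ℝ} (Ψ : ℕ → ℝ → ℝ)

lemma main_nondiff (hn : 1 ≤ n) (hf : ContDiffOn ℝ n f K01)
    (hΨ : ∀ j t, HasDerivAt (Ψ j) (Ψ (j+1) t) t)
    (hfmono : StrictMonoOn f K01)
    (hfbad : ∀ a b : ℝ, 0 ≤ a → a < b → b ≤ 1 → ∃ x ∈ Ioo a b,
      ¬ DifferentiableWithinAt ℝ (iteratedDerivWithin n f K01) K01 x)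
    (hΨ1 : ∀ u v : ℝ, u < v → ∃ t ∈ Ioo u v, Ψ 1 t ≠ 0) :
    ∀ a b : ℝ, 0 ≤ a → a < b → b ≤ 1 → ∃ x ∈ Ioo a b,
      ¬ DifferentiableWithinAt ℝ (iteratedDerivWithin n (fun y => Ψ 0 (f y)) K01) K01 x := by
  intro a b ha hab hb
  have hcont : ContinuousOn f K01 := hf.continuousOn
  set c := a + (b-a)/3 with hc
  set d := b - (b-a)/3 with hd
  have hac : a < c := by rw [hc]; linarith
  have hcd : c < d := by rw [hc, hd]; linarith
  have hdb : d < b := by rw [hd]; linarith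
  have hcK : c ∈ K01 := ⟨by linarith, by linarith⟩
  have hdK : d ∈ K01 := ⟨by linarith, by linarith⟩
  have hfw : f c < f d := hfmono hcK hdK hcd
  obtain ⟨t0, ht0, ht0ne⟩ := hΨ1 (f c) (f d) hfw
  have hIcc : Icc c d ⊆ K01 := Icc_subset_Icc (by linarith) (by linarith)
  obtain ⟨x1, hx1m, hx1⟩ := intermediate_value_Ioo hcd.le (hcont.mono hIcc) ht0
  have hx1K : x1 ∈ K01 := ⟨by linarith [hx1m.1], by linarith [hx1m.2]⟩
  set q : ℝ → ℝ := fun x => Ψ 1 (f x) with hq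
  have hq1 : q x1 ≠ 0 := by rw [hq]; simpa [hx1] using ht0ne
  have hΨc : Continuous (Ψ 1) :=
    continuous_iff_continuousAt.2 fun t => (hΨ 1 t).differentiableAt.continuousAt
  have hqcont : ContinuousOn q K01 := hΨc.comp_continuousOn hcont
  have hx1I : x1 ∈ Ioo (0:ℝ) 1 := ⟨by linarith [hx1m.1], by linarith [hx1m.2]⟩
  have hnhd : K01 ∈ 𝓝 x1 := Icc_mem_nhds hx1I.1 hx1I.2
  have hqca : ContinuousAt q x1 := hΨc.continuousAt.comp (hcont.continuousAt hnhd)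
  have hev : ∀ᶠ x in 𝓝 x1, q x ≠ 0 := hqca.eventually_ne hq1
  obtain ⟨ε, hε, hball⟩ := Metric.eventually_nhds_iff.1 hev
  set a2 := max a (x1 - ε) with ha2
  set b2 := min b (x1 + ε) with hb2
  have hax1 : a < x1 := by linarith [hx1m.1]
  have hx1b : x1 < b := by linarith [hx1m.2]
  have ha2x1 : a2 < x1 := max_lt hax1 (by linarith)
  have hx1b2 : x1 < b2 := lt_min hx1b (by linarith)
  have hsubab : Ioo a2 b2 ⊆ Ioo a b := fun x hx =>
    ⟨lt_of_le_of_lt (le_max_left _ _) hx.1, lt_of_lt_of_le hx.2 (min_le_left _ _)⟩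
  have hqball : ∀ x ∈ Ioo a2 b2, q x ≠ 0 := by
    intro x hx
    apply hball
    rw [Real.dist_eq, abs_sub_lt_iff]
    constructor
    · have := hx.2
      have := min_le_right b (x1 + ε)
      linarith [lt_of_lt_of_le hx.2 (min_le_right b (x1 + ε))]
    · linarith [lt_of_le_of_lt (le_max_right a (x1 - ε)) hx.1]
  obtain ⟨x0, hx0m, hx0bad⟩ := hfbad a2 b2 (le_trans ha (le_max_left _ _))
    (lt_trans ha2x1 hx1b2) (le_trans (min_le_left _ _) hb)
  have hx0ab : x0 ∈ Ioo a b := hsubab hx0m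
  have hx0K : x0 ∈ K01 := ⟨by linarith [hx0ab.1], by linarith [hx0ab.2]⟩
  have hqx0 : q x0 ≠ 0 := hqball x0 hx0m
  refine ⟨x0, hx0ab, ?_⟩
  intro hdiff
  obtain ⟨R, hRdiff, hR⟩ := faa_formula' Ψ hn hf hΨ
  -- q * Dk n is differentiable at x0
  have hW : DifferentiableWithinAt ℝ
      (fun x => q x * iteratedDerivWithin n f K01 x + R x) K01 x0 :=
    hdiff.congr (fun y hy => (hR y hy).symm) ((hR x0 hx0K).symm) |>.congr
      (fun y hy => rfl) rfl
  have hQD : DifferentiableWithinAt ℝ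
      (fun x => q x * iteratedDerivWithin n f K01 x) K01 x0 := by
    have := hW.sub (hRdiff x0 hx0K)
    exact this.congr (fun y _ => by rw [Pi.sub_apply]; ring) (by rw [Pi.sub_apply]; ring)
  have hqdiff : DifferentiableWithinAt ℝ q K01 x0 := by
    have hfd : DifferentiableWithinAt ℝ f K01 x0 :=
      hf.differentiableOn (by exact_mod_cast (show n ≠ 0 by omega)) x0 hx0K
    exact ((hΨ 1 (f x0)).differentiableAt.comp_differentiableWithinAt x0 hfd)
  have hdivd := hQD.div hqdiff hqx0
  have hevq : ∀ᶠ x in 𝓝[K01] x0, q x ≠ 0 := by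
    have hqcw : ContinuousWithinAt q K01 x0 := hqcont x0 hx0K
    exact hqcw (compl_singleton_mem_nhds hqx0)
  have hDkn : DifferentiableWithinAt ℝ (iteratedDerivWithin n f K01) K01 x0 := by
    apply hdivd.congr_of_eventuallyEq ?_ ?_
    · filter_upwards [hevq] with x hx
      rw [Pi.div_apply]
      field_simp
    · rw [Pi.div_apply]
      field_simp
  exact hx0bad hDkn
end Main

section Poly
variable {m : ℕ} (c : Fin m → ℝ) (P : MvPolynomial (Fin m) ℝ)

/-- exponent attached to a monomial -/
noncomputable def muP (α : Fin m →₀ ℕ) : ℝ := ∑ i, (α i : ℝ) * c i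

/-- the exponential polynomial family (j-th derivative) -/
noncomputable def PsiP (j : ℕ) (t : ℝ) : ℝ :=
  ∑ α ∈ P.support, (MvPolynomial.coeff α P * muP c α ^ j) * Real.exp (muP c α * t)

lemma hasDerivAt_PsiP (j : ℕ) (t : ℝ) :
    HasDerivAt (PsiP c P j) (PsiP c P (j+1) t) t := by
  unfold PsiP
  apply HasDerivAt.fun_sum
  intro α _
  have h1 : HasDerivAt (fun t : ℝ => muP c α * t) (muP c α) t := by
    simpa using (hasDerivAt_id t).const_mul (muP c α)
  have h2 := (Real.hasDerivAt_exp (muP c α * t)).comp t h1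
  have h3 := h2.const_mul (MvPolynomial.coeff α P * muP c α ^ j)
  exact h3.congr_deriv (by ring)

lemma muP_zero : muP c 0 = 0 := by simp [muP]

lemma muP_inj (hli : LinearIndependent ℚ c) : Function.Injective (muP c) := by
  intro α β h
  have key := Fintype.linearIndependent_iff.1 hli (fun i => (α i : ℚ) - (β i : ℚ))
  have hsum : (∑ i, ((α i : ℚ) - (β i : ℚ)) • c i) = 0 := by
    have : ∀ i, ((α i : ℚ) - (β i : ℚ)) • c i = (α i : ℝ) * c i - (β i : ℝ) * c i := by
      intro i
      rw [Rat.smul_def]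
      push_cast
      ring
    rw [Finset.sum_congr rfl (fun i _ => this i), Finset.sum_sub_distrib]
    unfold muP at h
    rw [h]; ring
  have hcoord : ∀ i, (α i : ℚ) = (β i : ℚ) := by
    intro i
    have := key hsum i
    linarith [this]
  ext i
  exact_mod_cast hcoord i

lemma eval_eq_PsiP (y : ℝ) :
    MvPolynomial.eval (fun i => Real.exp (c i * y)) P = PsiP c P 0 y := by
  rw [MvPolynomial.eval_eq']
  unfold PsiP
  apply Finset.sum_congr rfl
  intro α _
  rw [pow_zero, mul_one]
  congr 1
  have : ∀ i : Fin m, Real.exp (c i * y) ^ (α i) = Real.exp ((α i : ℝ) * (c i * y)) := by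
    intro i
    rw [Real.exp_nat_mul]
  rw [Finset.prod_congr rfl (fun i _ => this i), ← Real.exp_sum]
  congr 1
  unfold muP
  rw [Finset.sum_mul]
  apply Finset.sum_congr rfl
  intro i _
  ring

lemma contDiff_PsiP (j : ℕ) (N : ℕ) : ContDiff ℝ N (PsiP c P j) := by
  unfold PsiP
  apply ContDiff.sum
  intro α _
  apply ContDiff.mul contDiff_const
  exact Real.contDiff_exp.comp (contDiff_const.mul contDiff_id)

lemma PsiP_one_ne (hli : LinearIndependent ℚ c) (hP : P ≠ 0)
    (hP0 : MvPolynomial.coeff 0 P = 0) :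
    ∀ u v : ℝ, u < v → ∃ t ∈ Ioo u v, PsiP c P 1 t ≠ 0 := by
  intro u v huv
  by_contra hcon
  push_neg at hcon
  have hz := expsum_zero_of_interval huv P.support (muP c)
    (fun α => MvPolynomial.coeff α P * muP c α ^ 1)
    ((muP_inj c hli).injOn) (fun t ht => by simpa [PsiP] using hcon t ht)
  obtain ⟨α, hα⟩ := (MvPolynomial.support_nonempty).2 hP
  have hcoeff : MvPolynomial.coeff α P ≠ 0 := MvPolynomial.mem_support_iff.1 hα
  have hμ : muP c α = 0 := by
    have := hz α hα
    rcases mul_eq_zero.1 this with h | h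
    · exact absurd h hcoeff
    · simpa using h
  have : α = 0 := muP_inj c hli (by rw [hμ, muP_zero])
  rw [this] at hcoeff
  exact hcoeff hP0

lemma PsiP_zero_ne (hli : LinearIndependent ℚ c) (hP : P ≠ 0)
    {u v : ℝ} (huv : u < v) :
    ∃ t ∈ Ioo u v, PsiP c P 0 t ≠ 0 := by
  by_contra hcon
  push_neg at hcon
  have hz := expsum_zero_of_interval huv P.support (muP c)
    (fun α => MvPolynomial.coeff α P * muP c α ^ 0)
    ((muP_inj c hli).injOn) (fun t ht => by simpa [PsiP] using hcon t ht)
  obtain ⟨α, hα⟩ := (MvPolynomial.support_nonempty).2 hP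
  have hcoeff : MvPolynomial.coeff α P ≠ 0 := MvPolynomial.mem_support_iff.1 hα
  have := hz α hα
  simp only [pow_zero, mul_one] at this
  exact hcoeff this
end Poly


/-- Theorem 4 of the paper. For every `n ≥ 1`, the set `E n` of
functions of class `C^n` on `[0,1]` having no derivative of order `n+1` somewhere in every
nonempty open subinterval of `[0,1]` is strongly `𝔠`-algebrable: there is a set `X` of
cardinality continuum of elements of `E n` which freely generates a subalgebra of
`ℝ^[0,1]` contained in `E n ∪ {0}`. -/
theorem En_strongly_c_algebrable (n : ℕ) (hn : 1 ≤ n) :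
    ∃ X : Set (ℝ → ℝ), Cardinal.mk X = Cardinal.continuum ∧
      (∀ f ∈ X, MemEn n f) ∧
      ∀ m : ℕ, 1 ≤ m → ∀ G : Fin m → ℝ → ℝ, (∀ i, G i ∈ X) → Function.Injective G →
        ∀ P : MvPolynomial (Fin m) ℝ, P ≠ 0 → MvPolynomial.coeff 0 P = 0 →
          MemEn n (fun x => MvPolynomial.eval (fun i => G i x) P) ∧
          ∃ x ∈ Icc (0:ℝ) 1, MvPolynomial.eval (fun i => G i x) P ≠ 0 := by
  classical
  set f : ℝ → ℝ := gg n 0 with hfdef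
  have hfC : ContDiffOn ℝ n f K01 := contDiffOn_gg n n 0 (by omega)
  have hmono : StrictMonoOn f K01 := gg_strictMono n
  have hfbad : ∀ a b : ℝ, 0 ≤ a → a < b → b ≤ 1 → ∃ x ∈ Ioo a b,
      ¬ DifferentiableWithinAt ℝ (iteratedDerivWithin n f K01) K01 x := by
    intro a b ha hab hb
    obtain ⟨k, hk⟩ := qseq_dense ha hab hb
    refine ⟨qseq k, hk, fun h => gg_not_diff n k ?_⟩
    have hkK : qseq k ∈ K01 := ⟨(qseq_mem k).1.le, (qseq_mem k).2.le⟩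
    exact h.congr (fun y hy => (iteratedDerivWithin_gg n n le_rfl hy).symm)
      ((iteratedDerivWithin_gg n n le_rfl hkK).symm)
  have hf01 : f 0 < f 1 := hmono (by norm_num : (0:ℝ) ∈ K01) (by norm_num : (1:ℝ) ∈ K01)
    zero_lt_one
  have hf1 : 0 < f 1 := by
    have h0 : f 0 = 0 := gg_zero_eq n
    linarith
  set B : Set ℝ := Module.Basis.ofVectorSpaceIndex ℚ ℝ with hBdef
  have hBli : LinearIndependent ℚ (fun b : B => (b : ℝ)) := by
    have := (Module.Basis.ofVectorSpace ℚ ℝ).linearIndependent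
    rwa [Module.Basis.coe_ofVectorSpace] at this
  have hBmk : Cardinal.mk B = Cardinal.continuum := by
    rw [← Real.rank_rat_real]
    exact (Module.Basis.ofVectorSpace ℚ ℝ).mk_eq_rank''
  set Φ : ℝ → (ℝ → ℝ) := fun c₀ => fun x => Real.exp (c₀ * f x) with hΦdef
  have hΦinj : Function.Injective Φ := by
    intro c₁ c₂ h
    have h1 := congrFun h 1
    simp only [hΦdef] at h1
    have := Real.exp_injective h1
    exact mul_right_cancel₀ hf1.ne' this
  refine ⟨Φ '' B, ?_, ?_, ?_⟩
  · rw [Cardinal.mk_image_eq_of_injOn Φ B hΦinj.injOn, hBmk]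
  · -- membership: deferred to the general clause below, proved directly here
    intro g hg
    obtain ⟨c₀, hc₀B, hc₀⟩ := hg
    -- use the general machinery with m = 1, P = X 0
    have hli : LinearIndependent ℚ (fun _ : Fin 1 => c₀) := by
      have he : Function.Injective (fun _ : Fin 1 => (⟨c₀, hc₀B⟩ : B)) := by
        intro i j _; exact Subsingleton.elim i j
      exact hBli.comp (fun _ : Fin 1 => (⟨c₀, hc₀B⟩ : B)) he
    set cc : Fin 1 → ℝ := fun _ => c₀ with hccdef
    set P : MvPolynomial (Fin 1) ℝ := MvPolynomial.X 0 with hPdef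
    have hP : P ≠ 0 := MvPolynomial.X_ne_zero 0
    have hP0 : MvPolynomial.coeff 0 P = 0 := MvPolynomial.coeff_zero_X 0
    have hgeq : g = fun x => PsiP cc P 0 (f x) := by
      funext x
      rw [← eval_eq_PsiP cc P (f x), ← hc₀]
      simp [hPdef, hΦdef, hccdef]
    rw [hgeq]
    constructor
    · exact (contDiff_PsiP cc P 0 n).comp_contDiffOn hfC
    · exact main_nondiff (PsiP cc P) hn hfC (hasDerivAt_PsiP cc P) hmono hfbad
        (PsiP_one_ne cc P hli hP hP0)
  · intro m hm G hG hGinj P hP hP0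
    choose cc hccB hccG using fun i => hG i
    have hccinj : Function.Injective cc := by
      intro i j h
      apply hGinj
      rw [← hccG i, ← hccG j, h]
    have hli : LinearIndependent ℚ cc := by
      have he : Function.Injective (fun i => (⟨cc i, hccB i⟩ : B)) := by
        intro i j h
        exact hccinj (congrArg Subtype.val h)
      exact hBli.comp (fun i => (⟨cc i, hccB i⟩ : B)) he
    have hFeq : (fun x => MvPolynomial.eval (fun i => G i x) P)
        = fun x => PsiP cc P 0 (f x) := by
      funext x
      rw [← eval_eq_PsiP cc P (f x)]
      have harg : (fun i => G i x) = fun i => Real.exp (cc i * f x) := by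
        funext i; rw [← hccG i]
      rw [harg]
    rw [hFeq]
    refine ⟨⟨?_, ?_⟩, ?_⟩
    · exact (contDiff_PsiP cc P 0 n).comp_contDiffOn hfC
    · exact main_nondiff (PsiP cc P) hn hfC (hasDerivAt_PsiP cc P) hmono hfbad
        (PsiP_one_ne cc P hli hP hP0)
    · obtain ⟨t0, ht0, ht0ne⟩ := PsiP_zero_ne cc P hli hP hf01
      obtain ⟨x, hxm, hx⟩ := intermediate_value_Ioo (by norm_num : (0:ℝ) ≤ 1)
        hfC.continuousOn ht0
      refine ⟨x, ⟨hxm.1.le, hxm.2.le⟩, ?_⟩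
      have hpt : MvPolynomial.eval (fun i => G i x) P = PsiP cc P 0 (f x) :=
        congrFun hFeq x
      rw [hpt, hx]
      exact ht0ne
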